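/- arXiv:1203.3284 — 4 statements merged into one kernel-verified Lean document; each statement's English description precedes it below -/
import Mathlib

section
/- Let n and k be positive integers, let S = {(i,j) : i ∈ {1,...,n}, j ∈ {0,1,...,k}}, and for each i ∈ {1,...,n} let L_i = {(i,0)} and U_i = {(i,0),(i,1),...,(i,k)}. Then the number of directed binary perfect phylogenies for (S, (L_1,...,L_n), (U_1,...,U_n)) is exactly 2^{kn}. -/
/-- A sequence of subsets (indexed by `ι`) of a finite set is a laminar if for every two
indices `i, j` the intersection `S i ∩ S j` is either `S i`, `S j`, or empty. -/
def IsLaminar {ι α : Type*} [DecidableEq α] (T : ι → Finset α) : Prop :=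
  ∀ i j, T i ∩ T j = T i ∨ T i ∩ T j = T j ∨ T i ∩ T j = ∅

/-- A directed binary perfect phylogeny for `(S, L, U)`: a laminar `T` with
`L i ⊆ T i ⊆ U i` for all `i`. -/
def IsDBPP {ι α : Type*} [DecidableEq α] (L U T : ι → Finset α) : Prop :=
  IsLaminar T ∧ ∀ i, L i ⊆ T i ∧ T i ⊆ U i

/-- With `S = {1,…,n} × {0,…,k}`, `L i = {(i,0)}` and `U i = {(i,0),…,(i,k)}`, the number of
directed binary perfect phylogenies is `2^(k*n)`. -/
theorem stmt0 (n k : ℕ) (hn : 0 < n) (hk : 0 < k) :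
    Nat.card {T : Fin n → Finset (Fin n × Fin (k + 1)) //
      IsDBPP (fun i => {(i, (0 : Fin (k + 1)))})
             (fun i => Finset.univ.image (fun j : Fin (k + 1) => (i, j))) T} =
      2 ^ (k * n) := by
  have e : {T : Fin n → Finset (Fin n × Fin (k + 1)) //
      IsDBPP (fun i => {(i, (0 : Fin (k + 1)))})
             (fun i => Finset.univ.image (fun j : Fin (k + 1) => (i, j))) T} ≃
      (Fin n → Finset (Fin k)) := by
    refine
      { toFun := fun T i => Finset.univ.filter (fun j : Fin k => (i, j.succ) ∈ T.1 i)
        invFun := fun f => ⟨fun i => insert (i, (0 : Fin (k+1)))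
            ((f i).image (fun j => (i, j.succ))), ?_, ?_⟩
        left_inv := ?_
        right_inv := ?_ }
    · -- laminar
      intro i j
      by_cases h : i = j
      · subst h; left; exact Finset.inter_self _
      · right; right
        rw [Finset.eq_empty_iff_forall_notMem]
        rintro ⟨a, b⟩ hab
        rw [Finset.mem_inter] at hab
        obtain ⟨h1, h2⟩ := hab
        have e1 : a = i := by
          rcases Finset.mem_insert.1 h1 with h | h
          · exact (Prod.mk.injEq .. ▸ h).1
          · obtain ⟨j', _, hj'⟩ := Finset.mem_image.1 h
            exact ((Prod.mk.injEq .. ▸ hj').1).symm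
        have e2 : a = j := by
          rcases Finset.mem_insert.1 h2 with h | h
          · exact (Prod.mk.injEq .. ▸ h).1
          · obtain ⟨j', _, hj'⟩ := Finset.mem_image.1 h
            exact ((Prod.mk.injEq .. ▸ hj').1).symm
        exact h (e1 ▸ e2)
    · -- containments
      intro i
      constructor
      · intro x hx
        simp only [Finset.mem_singleton] at hx
        exact hx ▸ Finset.mem_insert_self _ _
      · intro x hx
        simp only [Finset.mem_image, Finset.mem_univ, true_and]
        rcases Finset.mem_insert.1 hx with h | h
        · exact ⟨0, h.symm⟩
        · obtain ⟨j', _, hj'⟩ := Finset.mem_image.1 h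
          exact ⟨j'.succ, hj'⟩
    · -- left inverse
      rintro ⟨T, hlam, hTU⟩
      apply Subtype.ext
      funext i
      ext ⟨a, b⟩
      simp only [Finset.mem_insert, Finset.mem_image, Finset.mem_filter, Finset.mem_univ,
        true_and, Prod.mk.injEq]
      constructor
      · rintro (⟨ha, hb⟩ | ⟨j, hj, ha, hb⟩)
        · rw [ha, hb]; exact (hTU _).1 (Finset.mem_singleton_self _)
        · rw [← ha, ← hb]; exact hj
      · intro hab
        have ha : a = i := by
          have := (hTU i).2 hab
          obtain ⟨j', _, hj'⟩ := Finset.mem_image.1 this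
          exact ((Prod.mk.injEq .. ▸ hj').1).symm
        subst ha
        rcases Fin.eq_zero_or_eq_succ b with h | ⟨j, hj⟩
        · exact Or.inl ⟨rfl, h⟩
        · exact Or.inr ⟨j, hj ▸ hab, rfl, hj.symm⟩
    · -- right inverse
      intro f
      funext i
      ext j
      simp only [Finset.mem_filter, Finset.mem_univ, true_and, Finset.mem_insert,
        Finset.mem_image, Prod.mk.injEq]
      constructor
      · rintro (h | ⟨a, ha, hh⟩)
        · exact absurd h (Fin.succ_ne_zero j)
        · rwa [Fin.succ_injective _ hh] at ha
      · intro hj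
        exact Or.inr ⟨j, hj, rfl⟩
  rw [Nat.card_congr e, Nat.card_eq_fintype_card, Fintype.card_fun]
  simp [Fintype.card_finset, pow_mul]
end

section
/- Let G = (V, E) be a finite simple bipartite graph with bipartition V = A ∪ B. For each edge e = {a,b} ∈ E with a ∈ A and b ∈ B, set L_e = {a} and U_e = {a,b}. If (S_e)_{e ∈ E} is a directed binary perfect phylogeny for (V, (L_e)_{e∈E}, (U_e)_{e∈E}), then the set M = {e ∈ E : S_e = U_e} is a matching of G, i.e., no two distinct edges of M share an endpoint. -/
/-- Bipartite graph instance: vertices `V`, bipartition `A, B`, edge set indexed by a finite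
type `E`, with each edge `e` having endpoints `fa e ∈ A` and `fb e ∈ B`; the graph is simple,
i.e., distinct edge indices give distinct endpoint pairs.  With `L e = {fa e}` and
`U e = {fa e, fb e}`, if `T` is a directed binary perfect phylogeny then
`M = {e : T e = U e}` is a matching: no two distinct edges of `M` share an endpoint. -/
theorem stmt2 {V : Type*} [Fintype V] [DecidableEq V]
    {E : Type*} [Fintype E] [DecidableEq E]
    (A B : Finset V) (hAB : Disjoint A B) (hcover : A ∪ B = Finset.univ)
    (fa fb : E → V) (ha : ∀ e, fa e ∈ A) (hb : ∀ e, fb e ∈ B)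
    (hsimple : ∀ e e' : E, fa e = fa e' → fb e = fb e' → e = e')
    (T : E → Finset V)
    (hT : IsDBPP (fun e => {fa e}) (fun e => {fa e, fb e}) T) :
    ∀ e e' : E, e ≠ e' → T e = {fa e, fb e} → T e' = {fa e', fb e'} →
      ({fa e, fb e} ∩ {fa e', fb e'} : Finset V) = ∅ := by
  have hdis : ∀ x, x ∈ A → x ∈ B → False := fun x hx hy =>
    Finset.disjoint_left.mp hAB hx hy
  have key : ∀ e e' : E, ({fa e, fb e} : Finset V) ⊆ {fa e', fb e'} → e = e' := by
    intro e e' hsub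
    have h1 : fa e = fa e' := by
      have := hsub (by simp : fa e ∈ ({fa e, fb e} : Finset V))
      simp only [Finset.mem_insert, Finset.mem_singleton] at this
      rcases this with h1 | h1
      · exact h1
      · exact absurd (hb e') (fun hh => hdis _ (ha e) (h1 ▸ hh))
    have h2 : fb e = fb e' := by
      have := hsub (by simp : fb e ∈ ({fa e, fb e} : Finset V))
      simp only [Finset.mem_insert, Finset.mem_singleton] at this
      rcases this with h2 | h2
      · exact absurd (ha e') (fun hh => hdis _ (h2 ▸ hh) (hb e))
      · exact h2
    exact hsimple e e' h1 h2
  intro e e' hne hTe hTe'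
  obtain ⟨hlam, _⟩ := hT
  rcases hlam e e' with h | h | h
  · rw [hTe, hTe'] at h
    exact absurd (key e e' (fun x hx => (Finset.mem_inter.mp (h ▸ hx)).2)) hne
  · rw [hTe, hTe'] at h
    exact absurd (key e' e (fun x hx => (Finset.mem_inter.mp (h ▸ hx)).1)) (Ne.symm hne)
  · rw [hTe, hTe'] at h
    exact h
end

section
/- Let G = (V, E) be a finite simple bipartite graph with bipartition V = A ∪ B. For each edge e = {a,b} ∈ E with a ∈ A and b ∈ B, set L_e = {a} and U_e = {a,b}. If M ⊆ E is a matching of G, then the sequence (S_e)_{e∈E} defined by S_e = U_e if e ∈ M and S_e = L_e otherwise is a directed binary perfect phylogeny for (V, (L_e)_{e∈E}, (U_e)_{e∈E}). -/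
/-- Bipartite graph instance: vertices `V`, bipartition `A, B`, edge set indexed by a finite
type `E`, with each edge `e` having endpoints `fa e ∈ A` and `fb e ∈ B`; the graph is simple,
i.e., distinct edge indices give distinct endpoint pairs.  With `L e = {fa e}` and
`U e = {fa e, fb e}`, if `M` is a matching of the graph (no two distinct edges of `M`
share an endpoint), then the sequence `T` with `T e = U e` for `e ∈ M` and `T e = L e`
otherwise is a directed binary perfect phylogeny. -/
theorem stmt3 {V : Type*} [Fintype V] [DecidableEq V]
    {E : Type*} [Fintype E] [DecidableEq E]
    (A B : Finset V) (hAB : Disjoint A B) (hcover : A ∪ B = Finset.univ)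
    (fa fb : E → V) (ha : ∀ e, fa e ∈ A) (hb : ∀ e, fb e ∈ B)
    (hsimple : ∀ e e' : E, fa e = fa e' → fb e = fb e' → e = e')
    (M : Finset E)
    (hM : ∀ e ∈ M, ∀ e' ∈ M, e ≠ e' →
      ({fa e, fb e} ∩ {fa e', fb e'} : Finset V) = ∅) :
    IsDBPP (fun e => {fa e}) (fun e => {fa e, fb e})
      (fun e => if e ∈ M then {fa e, fb e} else {fa e}) := by
  have hne : ∀ e e' : E, fa e ≠ fb e' := fun e e' h => by
    exact absurd (hb e') (Finset.disjoint_left.mp hAB (h ▸ ha e))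
  constructor
  · intro e e'
    by_cases he : e ∈ M <;> by_cases he' : e' ∈ M <;> simp only [he, he', if_true, if_false]
    · by_cases heq : e = e'
      · subst heq; left; simp
      · right; right; exact hM e he e' he' heq
    · by_cases heq : fa e = fa e'
      · right; left; ext x; simp
        rintro rfl; exact Or.inl heq.symm
      · right; right; ext x
        simp only [Finset.mem_inter, Finset.mem_insert, Finset.mem_singleton,
          Finset.notMem_empty, iff_false]
        rintro ⟨h1 | h1, h2⟩
        · exact heq (h2.symm.trans h1).symm
        · exact hne e' e (h2.symm.trans h1)
    · by_cases heq : fa e = fa e'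
      · left; ext x; simp
        rintro rfl; exact Or.inl heq
      · right; right; ext x
        simp only [Finset.mem_inter, Finset.mem_insert, Finset.mem_singleton,
          Finset.notMem_empty, iff_false]
        rintro ⟨h1, h2 | h2⟩
        · exact heq (h1.symm ▸ h2)
        · exact hne e e' (h1.symm ▸ h2)
    · by_cases heq : fa e = fa e'
      · left; simp [heq]
      · right; right; ext x; simp
        intro h1 h2; exact heq (h1.symm ▸ h2)
  · intro e
    by_cases he : e ∈ M <;> simp [he, Finset.insert_subset_iff]
end

section
/- Let G = (V, E) be a finite simple bipartite graph with bipartition V = A ∪ B. For each edge e = {a,b} ∈ E with a ∈ A and b ∈ B, set L_e = {a} and U_e = {a,b}. Then the map sending a matching M ⊆ E of G to the sequence (S_e)_{e∈E} with S_e = U_e if e ∈ M and S_e = L_e otherwise is a bijection between the set of matchings of G and the set of directed binary perfect phylogenies for (V, (L_e)_{e∈E}, (U_e)_{e∈E}); in particular, the number of matchings of G equals the number of directed binary perfect phylogenies for this instance. -/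
/-- A matching of the bipartite graph with edges `e` having endpoints `fa e` and `fb e`:
a set of edges no two of which share an endpoint. -/
def IsMatching {V : Type*} [DecidableEq V] {E : Type*} (fa fb : E → V) (M : Finset E) : Prop :=
  ∀ e ∈ M, ∀ e' ∈ M, e ≠ e' → ({fa e, fb e} ∩ {fa e', fb e'} : Finset V) = ∅

/-- Bipartite graph instance: vertices `V`, bipartition `A, B`, edge set indexed by a finite
type `E`, with each edge `e` having endpoints `fa e ∈ A` and `fb e ∈ B`; the graph is simple,
i.e., distinct edge indices give distinct endpoint pairs.  With `L e = {fa e}` and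
`U e = {fa e, fb e}`, the map sending a matching `M` to the sequence `T` with `T e = U e`
for `e ∈ M` and `T e = L e` otherwise is a bijection from matchings to directed binary
perfect phylogenies; in particular the numbers of the two kinds of objects coincide. -/
theorem stmt4 {V : Type*} [Fintype V] [DecidableEq V]
    {E : Type*} [Fintype E] [DecidableEq E]
    (A B : Finset V) (hAB : Disjoint A B) (hcover : A ∪ B = Finset.univ)
    (fa fb : E → V) (ha : ∀ e, fa e ∈ A) (hb : ∀ e, fb e ∈ B)
    (hsimple : ∀ e e' : E, fa e = fa e' → fb e = fb e' → e = e') :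
    (∃ Φ : {M : Finset E // IsMatching fa fb M} →
        {T : E → Finset V // IsDBPP (fun e => {fa e}) (fun e => {fa e, fb e}) T},
      Function.Bijective Φ ∧
      ∀ M : {M : Finset E // IsMatching fa fb M},
        (Φ M : E → Finset V) =
          fun e => if e ∈ (M : Finset E) then {fa e, fb e} else {fa e}) ∧
    Nat.card {M : Finset E // IsMatching fa fb M} =
      Nat.card {T : E → Finset V //
        IsDBPP (fun e => {fa e}) (fun e => {fa e, fb e}) T} := by
  have hne : ∀ e e' : E, fa e ≠ fb e' := by
    intro e e' h
    exact (Finset.disjoint_left.mp hAB (ha e) (h ▸ hb e'))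
  -- well-definedness
  have hΦok : ∀ M : Finset E, IsMatching fa fb M →
      IsDBPP (fun e => {fa e}) (fun e => {fa e, fb e})
        (fun e => if e ∈ M then {fa e, fb e} else {fa e}) := by
    intro M hM
    constructor
    · intro i j
      by_cases hi : i ∈ M <;> by_cases hj : j ∈ M <;> simp only [hi, hj, if_pos, if_neg,
        if_true, if_false]
      · by_cases hij : i = j
        · subst hij; left; simp
        · right; right; exact hM i hi j hj hij
      · -- T j = {fa j}
        by_cases hmem : fa j ∈ ({fa i, fb i} : Finset V)
        · right; left
          apply Finset.Subset.antisymm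
          · exact Finset.inter_subset_right
          · intro x hx
            simp only [Finset.mem_singleton] at hx
            subst hx
            exact Finset.mem_inter.mpr ⟨hmem, Finset.mem_singleton_self _⟩
        · right; right
          rw [Finset.eq_empty_iff_forall_notMem]
          intro x hx
          rw [Finset.mem_inter, Finset.mem_singleton] at hx
          exact hmem (hx.2 ▸ hx.1)
      · by_cases hmem : fa i ∈ ({fa j, fb j} : Finset V)
        · left
          apply Finset.Subset.antisymm
          · exact Finset.inter_subset_left
          · intro x hx
            simp only [Finset.mem_singleton] at hx
            subst hx
            exact Finset.mem_inter.mpr ⟨Finset.mem_singleton_self _, hmem⟩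
        · right; right
          rw [Finset.eq_empty_iff_forall_notMem]
          intro x hx
          rw [Finset.mem_inter, Finset.mem_singleton] at hx
          exact hmem (hx.1 ▸ hx.2)
      · by_cases hmem : fa i = fa j
        · left; rw [hmem]; simp
        · right; right
          rw [Finset.eq_empty_iff_forall_notMem]
          intro x hx
          rw [Finset.mem_inter, Finset.mem_singleton, Finset.mem_singleton] at hx
          exact hmem (hx.1 ▸ hx.2 ▸ rfl)
    · intro i
      by_cases hi : i ∈ M <;> simp [hi, Finset.insert_subset_iff]
  classical
  set Φ : {M : Finset E // IsMatching fa fb M} →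
      {T : E → Finset V // IsDBPP (fun e => {fa e}) (fun e => {fa e, fb e}) T} :=
    fun M => ⟨fun e => if e ∈ (M : Finset E) then {fa e, fb e} else {fa e},
      hΦok M.1 M.2⟩ with hΦ
  have hinj : Function.Injective Φ := by
    intro ⟨M, hM⟩ ⟨M', hM'⟩ h
    have h' := congrArg Subtype.val h
    simp only [hΦ] at h'
    ext e
    have he := congrFun h' e
    constructor
    · intro hm
      by_contra hm'
      rw [if_pos hm, if_neg hm'] at he
      have : fb e ∈ ({fa e} : Finset V) := he ▸ (by simp)
      exact hne e e (Finset.mem_singleton.mp this).symm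
    · intro hm
      by_contra hm'
      rw [if_neg hm', if_pos hm] at he
      have : fb e ∈ ({fa e} : Finset V) := he ▸ (by simp)
      exact hne e e (Finset.mem_singleton.mp this).symm
  have hsurj : Function.Surjective Φ := by
    rintro ⟨T, hlam, hLU⟩
    have hTform : ∀ e, T e = (if fb e ∈ T e then {fa e, fb e} else {fa e}) := by
      intro e
      have h1 : fa e ∈ T e := (hLU e).1 (Finset.mem_singleton_self _)
      have h2 : T e ⊆ {fa e, fb e} := (hLU e).2
      by_cases hfb : fb e ∈ T e
      · rw [if_pos hfb]
        apply Finset.Subset.antisymm h2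
        intro x hx
        simp only [Finset.mem_insert, Finset.mem_singleton] at hx
        rcases hx with h | h
        · exact h ▸ h1
        · exact h ▸ hfb
      · rw [if_neg hfb]
        apply Finset.Subset.antisymm
        · intro x hx
          have := h2 hx
          simp only [Finset.mem_insert, Finset.mem_singleton] at this
          rcases this with h | h
          · simp [h]
          · exact absurd (h ▸ hx) hfb
        · simp [h1]
    refine ⟨⟨Finset.univ.filter (fun e => fb e ∈ T e), ?_⟩, ?_⟩
    · intro e he e' he' hee'
      simp only [Finset.mem_filter] at he he'
      have hTe : T e = {fa e, fb e} := by rw [hTform e, if_pos he.2]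
      have hTe' : T e' = {fa e', fb e'} := by rw [hTform e', if_pos he'.2]
      have key : ¬ (T e ⊆ T e') := by
        intro hsub
        rw [hTe, hTe'] at hsub
        have hfa : fa e ∈ ({fa e', fb e'} : Finset V) := hsub (by simp)
        have hfb' : fb e ∈ ({fa e', fb e'} : Finset V) := hsub (by simp)
        simp only [Finset.mem_insert, Finset.mem_singleton] at hfa hfb'
        have h1 : fa e = fa e' := by
          rcases hfa with h | h
          · exact h
          · exact absurd h (hne e e')
        have h2 : fb e = fb e' := by
          rcases hfb' with h | h
          · exact absurd h.symm (hne e' e)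
          · exact h
        exact hee' (hsimple e e' h1 h2)
      have key' : ¬ (T e' ⊆ T e) := by
        intro hsub
        rw [hTe, hTe'] at hsub
        have hfa : fa e' ∈ ({fa e, fb e} : Finset V) := hsub (by simp)
        have hfb' : fb e' ∈ ({fa e, fb e} : Finset V) := hsub (by simp)
        simp only [Finset.mem_insert, Finset.mem_singleton] at hfa hfb'
        have h1 : fa e = fa e' := by
          rcases hfa with h | h
          · exact h.symm
          · exact absurd h (hne e' e)
        have h2 : fb e = fb e' := by
          rcases hfb' with h | h
          · exact absurd h.symm (hne e e')
          · exact h.symm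
        exact hee' (hsimple e e' h1 h2)
      rcases hlam e e' with h | h | h
      · exact absurd (h ▸ Finset.inter_subset_right) key
      · exact absurd (h ▸ Finset.inter_subset_left) key'
      · rw [← hTe, ← hTe']; exact h
    · apply Subtype.ext
      simp only [hΦ]
      funext e
      simp only [Finset.mem_filter, Finset.mem_univ, true_and]
      exact (hTform e).symm
  refine ⟨⟨Φ, ⟨hinj, hsurj⟩, fun M => rfl⟩, Nat.card_eq_of_bijective Φ ⟨hinj, hsurj⟩⟩
end
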